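/- Let a, b ≥ 0 with a, b ≤ 5 log σ, σ sufficiently large, and let u, v ~ N(0,1) and ξ ~ N(0,σ²) be independent. Then |E[uv·r(au+bv+ξ)²] − E[u·r(au+bv+ξ)]·E[v·r(au+bv+ξ)]| ≤ C·polylog(σ) for an absolute constant C. -/

import Mathlib

open MeasureTheory ProbabilityTheory Real Filter Set
open scoped ENNReal NNReal Topology

noncomputable section

namespace Stmt7Aux

/-- The standard Gaussian measure on ℝ. -/
def stdG : Measure ℝ := gaussianReal 0 1

instance : IsProbabilityMeasure stdG := by unfold stdG; infer_instance

def pdf1 (x : ℝ) : ℝ := gaussianPDFReal 0 1 x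

lemma pdf1_eq (x : ℝ) : pdf1 x = (√(2 * π))⁻¹ * rexp (-(x ^ 2) / 2) := by
  simp [pdf1, gaussianPDFReal]

lemma pdf1_nonneg (x : ℝ) : 0 ≤ pdf1 x := gaussianPDFReal_nonneg 0 1 x

lemma pdf1_meas : Measurable fun x => (pdf1 x).toNNReal :=
  (measurable_gaussianPDFReal 0 1).real_toNNReal

lemma stdG_eq : stdG = volume.withDensity fun x => ((pdf1 x).toNNReal : ℝ≥0∞) := by
  rw [stdG, gaussianReal_of_var_ne_zero 0 one_ne_zero]
  rfl

lemma integral_stdG (g : ℝ → ℝ) : ∫ x, g x ∂stdG = ∫ x, pdf1 x * g x := by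
  rw [stdG_eq, integral_withDensity_eq_integral_smul pdf1_meas g]
  congr 1
  ext x
  simp only [NNReal.smul_def, smul_eq_mul, Real.coe_toNNReal _ (pdf1_nonneg x)]

lemma integrable_stdG_iff (g : ℝ → ℝ) :
    Integrable g stdG ↔ Integrable (fun x => pdf1 x * g x) volume := by
  rw [stdG_eq, integrable_withDensity_iff_integrable_smul pdf1_meas]
  constructor <;> intro h <;> apply h.congr <;> refine ae_of_all _ fun x => ?_ <;>
    simp only [NNReal.smul_def, smul_eq_mul, Real.coe_toNNReal _ (pdf1_nonneg x)]

lemma intpow (n : ℕ) : Integrable (fun x : ℝ => |x| ^ n) stdG := by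
  rw [integrable_stdG_iff]
  have hs : (-1 : ℝ) < (n : ℝ) := lt_of_lt_of_le (by norm_num) (Nat.cast_nonneg n)
  have h := ((integrable_rpow_mul_exp_neg_mul_sq (b := (2:ℝ)⁻¹) (by norm_num) hs).abs).const_mul
    ((√(2 * π))⁻¹)
  apply h.congr
  refine ae_of_all _ fun x => ?_
  simp only [rpow_natCast, abs_mul, abs_pow, Real.abs_exp]
  rw [pdf1_eq, show -(2:ℝ)⁻¹ * x ^ 2 = -(x ^ 2) / 2 by ring]
  ring

lemma int_one_add_abs_pow (n : ℕ) : Integrable (fun x : ℝ => (1 + |x|) ^ n) stdG := by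
  have hint : Integrable (fun x : ℝ => (2:ℝ) ^ n + 2 ^ n * |x| ^ n) stdG :=
    (integrable_const _).add ((intpow n).const_mul _)
  refine hint.mono' ?_ (ae_of_all _ fun x => ?_)
  · exact (Continuous.aestronglyMeasurable (by continuity))
  · have h0 : (0:ℝ) ≤ |x| := abs_nonneg x
    rw [Real.norm_eq_abs, abs_of_nonneg (by positivity)]
    rcases le_total |x| 1 with h | h
    · calc (1 + |x|) ^ n ≤ 2 ^ n := by
            apply pow_le_pow_left₀ (by linarith) (by linarith)
        _ ≤ 2 ^ n + 2 ^ n * |x| ^ n := le_add_of_nonneg_right (by positivity)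
    · calc (1 + |x|) ^ n ≤ (2 * |x|) ^ n := by
            apply pow_le_pow_left₀ (by linarith) (by linarith)
        _ = 2 ^ n * |x| ^ n := mul_pow _ _ _
        _ ≤ _ := le_add_of_nonneg_left (by positivity)

lemma int_dom {g : ℝ → ℝ} (hg : AEStronglyMeasurable g stdG) (c : ℝ) (n : ℕ)
    (h : ∀ x, |g x| ≤ c * (1 + |x|) ^ n) : Integrable g stdG :=
  ((int_one_add_abs_pow n).const_mul c).mono' hg
    (ae_of_all _ fun x => by simpa [Real.norm_eq_abs] using h x)

lemma pdf1_le (x : ℝ) : pdf1 x ≤ rexp (-(x ^ 2) / 2) := by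
  rw [pdf1_eq]
  have h1 : (1:ℝ) ≤ √(2 * π) := by
    rw [show (1:ℝ) = √1 by simp]
    exact Real.sqrt_le_sqrt (by nlinarith [Real.pi_gt_three])
  have := Real.exp_pos (-(x ^ 2) / 2)
  nlinarith [inv_le_one_of_one_le₀ h1, inv_nonneg.mpr (le_trans zero_le_one h1)]

lemma tendsto_aux (n : ℕ) (c : ℝ) :
    Tendsto (fun y : ℝ => c * ((1 + y) ^ n * rexp (-(y ^ 2) / 2))) atTop (𝓝 0) := by
  have h1 : Tendsto (fun s : ℝ => c * (s ^ n * rexp (-s))) atTop (𝓝 0) := by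
    have := (tendsto_pow_mul_exp_neg_atTop_nhds_zero n).const_mul c
    simpa using this
  have h2 : Tendsto (fun y : ℝ => c * ((1 + y) ^ n * rexp (-(1 + y)))) atTop (𝓝 0) :=
    h1.comp (tendsto_atTop_add_const_left atTop 1 tendsto_id)
  have h3 : Tendsto (fun y : ℝ => ‖c * ((1 + y) ^ n * rexp (-(1 + y)))‖) atTop (𝓝 0) := by
    simpa using h2.norm
  refine squeeze_zero_norm' ?_ h3
  filter_upwards [eventually_ge_atTop (3:ℝ)] with y hy
  have hy0 : (0:ℝ) ≤ 1 + y := by linarith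
  have hexp : rexp (-(y ^ 2) / 2) ≤ rexp (-(1 + y)) := by
    apply Real.exp_le_exp.mpr; nlinarith
  simp only [norm_mul, Real.norm_eq_abs, abs_pow, Real.abs_exp]
  have h5 : |1 + y| = 1 + y := abs_of_nonneg hy0
  rw [h5]
  have : (1 + y) ^ n * rexp (-(y ^ 2) / 2) ≤ (1 + y) ^ n * rexp (-(1 + y)) := by
    apply mul_le_mul_of_nonneg_left hexp (by positivity)
  nlinarith [abs_nonneg c, pow_nonneg hy0 n, Real.exp_pos (-(y^2)/2), Real.exp_pos (-(1+y))]

lemma tendsto_pdfmul {f : ℝ → ℝ} (c : ℝ) (n : ℕ) (hb : ∀ x, |f x| ≤ c * (1 + |x|) ^ n) :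
    Tendsto (fun x => f x * pdf1 x) atTop (𝓝 0) ∧
      Tendsto (fun x => f x * pdf1 x) atBot (𝓝 0) := by
  have hc : 0 ≤ c := le_trans (abs_nonneg (f 0)) (by simpa using hb 0)
  have key : ∀ x : ℝ, ‖f x * pdf1 x‖ ≤ c * ((1 + |x|) ^ n * rexp (-(x ^ 2) / 2)) := by
    intro x
    rw [Real.norm_eq_abs, abs_mul, abs_of_nonneg (pdf1_nonneg x)]
    have h1 := pdf1_le x
    have h2 := hb x
    have h3 : (0:ℝ) ≤ (1 + |x|) ^ n := by positivity
    nlinarith [pdf1_nonneg x, abs_nonneg (f x), Real.exp_pos (-(x^2)/2)]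
  constructor
  · refine squeeze_zero_norm' ?_ (tendsto_aux n c)
    filter_upwards [eventually_ge_atTop (0:ℝ)] with x hx
    have := key x; rwa [abs_of_nonneg hx] at this
  · have h4 : Tendsto (fun x : ℝ => c * ((1 + -x) ^ n * rexp (-(x ^ 2) / 2))) atBot (𝓝 0) := by
      have := (tendsto_aux n c).comp tendsto_neg_atBot_atTop
      simpa [Function.comp_def, neg_sq] using this
    refine squeeze_zero_norm' ?_ h4
    filter_upwards [eventually_le_atBot (0:ℝ)] with x hx
    have := key x; rwa [abs_of_nonpos hx] at this

lemma pdf1_hasDeriv (x : ℝ) : HasDerivAt pdf1 (-x * pdf1 x) x := by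
  have h1 : HasDerivAt (fun x : ℝ => -(x ^ 2) / 2) (-x) x := by
    have := ((hasDerivAt_pow 2 x).neg).div_const 2
    refine this.congr_deriv ?_
    norm_num; ring
  have h2 := (h1.exp).const_mul ((√(2 * π))⁻¹)
  have h3 : pdf1 = fun x => (√(2 * π))⁻¹ * rexp (-(x ^ 2) / 2) := funext pdf1_eq
  rw [h3]
  refine h2.congr_deriv ?_
  ring


end Stmt7Aux
section
open MeasureTheory ProbabilityTheory Real Filter Set Stmt7Aux
open scoped ENNReal NNReal Topology
namespace Stmt7Aux

theorem stein (f f' : ℝ → ℝ) (hder : ∀ x, HasDerivAt f (f' x) x)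
    (h1 : Integrable (fun x => x * f x) stdG) (h2 : Integrable f' stdG)
    (ht : Tendsto (fun x => f x * pdf1 x) atTop (𝓝 0))
    (hb : Tendsto (fun x => f x * pdf1 x) atBot (𝓝 0)) :
    ∫ x, x * f x ∂stdG = ∫ x, f' x ∂stdG := by
  set G : ℝ → ℝ := fun x => f x * pdf1 x with hG
  set g' : ℝ → ℝ := fun x => f' x * pdf1 x - x * f x * pdf1 x with hg'
  have hder' : ∀ x, HasDerivAt G (g' x) x := by
    intro x
    have := (hder x).mul (pdf1_hasDeriv x)
    refine this.congr_deriv ?_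
    simp only [hg']; ring
  have hint1 : Integrable (fun x => pdf1 x * (x * f x)) volume := (integrable_stdG_iff _).mp h1
  have hint2 : Integrable (fun x => pdf1 x * f' x) volume := (integrable_stdG_iff _).mp h2
  have hint : Integrable g' volume := by
    apply (hint2.sub hint1).congr
    refine ae_of_all _ fun x => ?_
    simp only [hg', Pi.sub_apply]; ring
  have hIoi : ∫ x in Ioi (0:ℝ), g' x = 0 - G 0 :=
    integral_Ioi_of_hasDerivAt_of_tendsto
      (hder' 0).continuousAt.continuousWithinAt
      (fun x _ => hder' x) hint.integrableOn ht
  have hIic : ∫ x in Iic (0:ℝ), g' x = G 0 - 0 :=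
    integral_Iic_of_hasDerivAt_of_tendsto
      (hder' 0).continuousAt.continuousWithinAt
      (fun x _ => hder' x) hint.integrableOn hb
  have hsum : ∫ x, g' x = 0 := by
    rw [← intervalIntegral.integral_Iic_add_Ioi (b := (0:ℝ)) hint.integrableOn hint.integrableOn, hIic, hIoi]
    ring
  have hint1' : Integrable (fun x => x * f x * pdf1 x) volume :=
    hint1.congr (ae_of_all _ fun x => by ring)
  have hint2' : Integrable (fun x => f' x * pdf1 x) volume :=
    hint2.congr (ae_of_all _ fun x => by ring)
  have hexp : ∫ x, g' x = (∫ x, f' x * pdf1 x) - ∫ x, x * f x * pdf1 x :=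
    integral_sub hint2' hint1'
  rw [hexp] at hsum
  rw [integral_stdG, integral_stdG]
  have e1 : ∫ x, pdf1 x * (x * f x) = ∫ x, x * f x * pdf1 x :=
    integral_congr_ae (ae_of_all _ fun x => by ring)
  have e2 : ∫ x, pdf1 x * f' x = ∫ x, f' x * pdf1 x :=
    integral_congr_ae (ae_of_all _ fun x => by ring)
  rw [e1, e2]
  linarith

lemma hasDerivAt_maxsq (y : ℝ) :
    HasDerivAt (fun s : ℝ => (max s 0) ^ 2) (2 * max y 0) y := by
  rcases lt_trichotomy y 0 with h | h | h
  · have heq : (fun s : ℝ => (0:ℝ)) =ᶠ[𝓝 y] fun s => (max s 0) ^ 2 := by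
      filter_upwards [Iio_mem_nhds h] with s hs
      rw [max_eq_right (le_of_lt hs)]
      norm_num
    have := (hasDerivAt_const y (0:ℝ)).congr_of_eventuallyEq heq.symm
    refine this.congr_deriv ?_
    rw [max_eq_right h.le]; ring
  · subst h
    rw [hasDerivAt_iff_isLittleO]
    rw [Asymptotics.isLittleO_iff]
    intro c hc
    filter_upwards [Metric.ball_mem_nhds (0:ℝ) hc] with s hs
    rw [Metric.mem_ball, Real.dist_eq, sub_zero] at hs
    simp only [max_self, sub_zero, smul_eq_mul]
    rw [show (max s 0) ^ 2 - (0:ℝ) ^ 2 - s * (2 * 0) = (max s 0) ^ 2 by ring]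
    rw [Real.norm_eq_abs, Real.norm_eq_abs]
    have h1 : |max s 0| ≤ |s| := by
      rw [abs_of_nonneg (le_max_right s 0)]
      exact max_le (le_abs_self s) (abs_nonneg s)
    calc |(max s 0) ^ 2| = |max s 0| * |max s 0| := by rw [← abs_mul]; ring_nf
      _ ≤ |s| * |s| := mul_le_mul h1 h1 (abs_nonneg _) (abs_nonneg _)
      _ ≤ c * |s| := mul_le_mul_of_nonneg_right hs.le (abs_nonneg _)
  · have heq : (fun s : ℝ => s ^ 2) =ᶠ[𝓝 y] fun s => (max s 0) ^ 2 := by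
      filter_upwards [Ioi_mem_nhds h] with s hs
      rw [max_eq_left (le_of_lt hs)]
    have := (hasDerivAt_pow 2 y).congr_of_eventuallyEq heq.symm
    refine this.congr_deriv ?_
    rw [max_eq_left h.le]
    simp

lemma hasDerivAt_rmax_affine (a c x : ℝ) :
    HasDerivAt (fun x => (max (a * x + c) 0) ^ 2) (2 * a * max (a * x + c) 0) x := by
  have h1 : HasDerivAt (fun x : ℝ => a * x + c) a x := by
    simpa using ((hasDerivAt_id x).const_mul a).add_const c
  have := (hasDerivAt_maxsq (a * x + c)).comp x h1
  refine this.congr_deriv ?_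
  ring

end Stmt7Aux
end
section
open MeasureTheory ProbabilityTheory Real Filter Set Stmt7Aux
open scoped ENNReal NNReal Topology
namespace Stmt7Aux

lemma abs_int_le {α : Type*} [MeasurableSpace α] (μ : Measure α) (g : α → ℝ) :
    |∫ x, g x ∂μ| ≤ ∫ x, |g x| ∂μ := by
  simpa [Real.norm_eq_abs] using norm_integral_le_integral_norm (μ := μ) g

lemma key_abs (a c x : ℝ) : |a * x + c| ≤ (|a| + |c|) * (1 + |x|) := by
  calc |a * x + c| ≤ |a * x| + |c| := abs_add_le _ _
    _ = |a| * |x| + |c| := by rw [abs_mul]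
    _ ≤ (|a| + |c|) * (1 + |x|) := by nlinarith [abs_nonneg a, abs_nonneg c, abs_nonneg x]

lemma abs_rmax_le (s : ℝ) : |max s 0| ≤ |s| := by
  rw [abs_of_nonneg (le_max_right s 0)]
  exact max_le (le_abs_self s) (abs_nonneg s)

lemma abs_rmax_le' (a c x : ℝ) : |max (a * x + c) 0| ≤ (|a| + |c|) * (1 + |x|) :=
  (abs_rmax_le _).trans (key_abs a c x)

lemma one_add_abs_nonneg (x : ℝ) : (0:ℝ) ≤ 1 + |x| := by positivity

lemma int_xrsq (a c : ℝ) : Integrable (fun x => x * (max (a * x + c) 0) ^ 2) stdG := by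
  refine int_dom (Continuous.aestronglyMeasurable (by fun_prop)) ((|a| + |c|) ^ 2) 3 fun x => ?_
  have h1 := abs_rmax_le' a c x
  have h2 := one_add_abs_nonneg x
  have hax : |x| ≤ 1 + |x| := by linarith [abs_nonneg x]
  calc |x * (max (a * x + c) 0) ^ 2| = |x| * |max (a * x + c) 0| ^ 2 := by
        rw [abs_mul, abs_pow]
    _ ≤ (1 + |x|) * ((|a| + |c|) * (1 + |x|)) ^ 2 :=
        mul_le_mul hax (pow_le_pow_left₀ (abs_nonneg _) h1 2) (by positivity) h2
    _ = (|a| + |c|) ^ 2 * (1 + |x|) ^ 3 := by ring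

lemma int_rmax (a c : ℝ) : Integrable (fun x => max (a * x + c) 0) stdG := by
  refine int_dom (Continuous.aestronglyMeasurable (by fun_prop)) (|a| + |c|) 1 fun x => ?_
  simpa using abs_rmax_le' a c x

lemma int_xr (a c : ℝ) : Integrable (fun x => x * max (a * x + c) 0) stdG := by
  refine int_dom (Continuous.aestronglyMeasurable (by fun_prop)) (|a| + |c|) 2 fun x => ?_
  have h1 := abs_rmax_le' a c x
  have h2 := one_add_abs_nonneg x
  have hax : |x| ≤ 1 + |x| := by linarith [abs_nonneg x]
  calc |x * max (a * x + c) 0| = |x| * |max (a * x + c) 0| := abs_mul _ _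
    _ ≤ (1 + |x|) * ((|a| + |c|) * (1 + |x|)) := mul_le_mul hax h1 (abs_nonneg _) h2
    _ = (|a| + |c|) * (1 + |x|) ^ 2 := by ring

lemma int_id : Integrable (fun x : ℝ => x) stdG := by
  apply (intpow 1).mono' (Continuous.aestronglyMeasurable (by fun_prop))
  refine ae_of_all _ fun x => ?_
  simp [Real.norm_eq_abs]

lemma m1 : ∫ x, x ∂stdG = 0 := by
  have hi : Integrable (fun x : ℝ => x * (fun _ : ℝ => (1:ℝ)) x) stdG := by
    simpa using int_id
  have ht := tendsto_pdfmul (f := fun _ : ℝ => (1:ℝ)) 1 0 (fun x => by norm_num)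
  have h := stein (fun _ => 1) (fun _ => 0) (fun x => hasDerivAt_const x 1)
    hi (integrable_const 0) ht.1 ht.2
  simpa using h

lemma int_sq : Integrable (fun x : ℝ => x * x) stdG := by
  apply (intpow 2).mono' (Continuous.aestronglyMeasurable (by fun_prop))
  refine ae_of_all _ fun x => ?_
  rw [Real.norm_eq_abs, abs_mul, ← abs_pow]
  simp [pow_two]

lemma m2 : ∫ x, x ^ 2 ∂stdG = 1 := by
  have ht := tendsto_pdfmul (f := fun x : ℝ => x) 1 1 (fun x => by simp [abs_nonneg])
  have h := stein (fun x => x) (fun _ => 1) (fun x => hasDerivAt_id x)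
    int_sq (integrable_const 1) ht.1 ht.2
  have h2 : ∫ (x : ℝ), (1:ℝ) ∂stdG = 1 := by simp
  calc ∫ x, x ^ 2 ∂stdG = ∫ x, x * x ∂stdG :=
        integral_congr_ae (ae_of_all _ fun x => by ring)
    _ = 1 := by rw [h]; exact h2

/-- Stein's identity for the ReLU-squared. -/
lemma K1 (a c : ℝ) :
    ∫ x, x * (max (a * x + c) 0) ^ 2 ∂stdG = 2 * a * ∫ x, max (a * x + c) 0 ∂stdG := by
  have hb : ∀ x : ℝ, |(max (a * x + c) 0) ^ 2| ≤ (|a| + |c|) ^ 2 * (1 + |x|) ^ 2 := by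
    intro x
    calc |(max (a * x + c) 0) ^ 2| = |max (a * x + c) 0| ^ 2 := by rw [abs_pow]
      _ ≤ ((|a| + |c|) * (1 + |x|)) ^ 2 :=
          pow_le_pow_left₀ (abs_nonneg _) (abs_rmax_le' a c x) 2
      _ = (|a| + |c|) ^ 2 * (1 + |x|) ^ 2 := by ring
  have htend := tendsto_pdfmul (f := fun x => (max (a * x + c) 0) ^ 2) ((|a| + |c|) ^ 2) 2 hb
  have h := stein (fun x => (max (a * x + c) 0) ^ 2) (fun x => 2 * a * max (a * x + c) 0)
    (hasDerivAt_rmax_affine a c)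
    (int_xrsq a c)
    ((int_rmax a c).const_mul (2 * a))
    htend.1 htend.2
  rw [h, integral_const_mul]

/-- Lipschitz bound for the first Gaussian moment of ReLU. -/
lemma K2 (d e : ℝ) : |∫ y, y * max (d * y + e) 0 ∂stdG| ≤ |d| := by
  have hint := int_xr d e
  have hconst : Integrable (fun y : ℝ => y * max e 0) stdG := int_id.mul_const _
  have h0 : ∫ y, y * max e 0 ∂stdG = 0 := by
    rw [integral_mul_const, m1, zero_mul]
  have hsq : Integrable (fun y : ℝ => |d| * y ^ 2) stdG := by
    refine Integrable.const_mul ?_ _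
    exact (intpow 2).congr (ae_of_all _ fun x => sq_abs x)
  calc |∫ y, y * max (d * y + e) 0 ∂stdG|
      = |∫ y, (y * max (d * y + e) 0 - y * max e 0) ∂stdG| := by
        rw [integral_sub hint hconst, h0, sub_zero]
    _ ≤ ∫ y, |y * max (d * y + e) 0 - y * max e 0| ∂stdG := abs_int_le _ _
    _ ≤ ∫ y, |d| * y ^ 2 ∂stdG := by
        refine integral_mono (hint.sub hconst).abs hsq fun y => ?_
        rw [← mul_sub, abs_mul]
        have h2 : |max (d * y + e) 0 - max e 0| ≤ |d * y| := by
          have := abs_max_sub_max_le_abs (d * y + e) e 0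
          simpa using this
        calc |y| * |max (d * y + e) 0 - max e 0| ≤ |y| * |d * y| :=
              mul_le_mul_of_nonneg_left h2 (abs_nonneg y)
          _ = |d| * y ^ 2 := by
              rw [abs_mul, show |y| * (|d| * |y|) = |d| * (|y| * |y|) by ring, ← abs_mul,
                abs_of_nonneg (mul_self_nonneg y), ← pow_two]
    _ = |d| * ∫ y, y ^ 2 ∂stdG := integral_const_mul _ _
    _ = |d| := by rw [m2, mul_one]

end Stmt7Aux
end
section
open MeasureTheory ProbabilityTheory Real Filter Set Stmt7Aux
open scoped ENNReal NNReal Topology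
namespace Stmt7Aux

def P2 : Measure (ℝ × ℝ) := stdG.prod stdG
def P3 : Measure ((ℝ × ℝ) × ℝ) := P2.prod stdG

instance : IsProbabilityMeasure P2 := by unfold P2; infer_instance
instance : IsProbabilityMeasure P3 := by unfold P3; infer_instance
instance : SFinite P2 := by unfold P2; infer_instance

lemma int2 (k l : ℕ) :
    Integrable (fun w : ℝ × ℝ => (1 + |w.1|) ^ k * (1 + |w.2|) ^ l) P2 :=
  (int_one_add_abs_pow k).mul_prod (int_one_add_abs_pow l)

lemma int3 (k l m : ℕ) :
    Integrable (fun p : (ℝ × ℝ) × ℝ =>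
      (1 + |p.1.1|) ^ k * (1 + |p.1.2|) ^ l * (1 + |p.2|) ^ m) P3 :=
  (int2 k l).mul_prod (int_one_add_abs_pow m)

lemma master2 {g : ℝ × ℝ → ℝ} (hg : AEStronglyMeasurable g P2) (c : ℝ) (k l : ℕ)
    (h : ∀ p, |g p| ≤ c * ((1 + |p.1|) ^ k * (1 + |p.2|) ^ l)) : Integrable g P2 :=
  ((int2 k l).const_mul c).mono' hg
    (ae_of_all _ fun p => by simpa [Real.norm_eq_abs] using h p)

lemma master3 {g : (ℝ × ℝ) × ℝ → ℝ} (hg : AEStronglyMeasurable g P3) (c : ℝ) (k l m : ℕ)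
    (h : ∀ p, |g p| ≤ c * ((1 + |p.1.1|) ^ k * (1 + |p.1.2|) ^ l * (1 + |p.2|) ^ m)) :
    Integrable g P3 :=
  ((int3 k l m).const_mul c).mono' hg
    (ae_of_all _ fun p => by simpa [Real.norm_eq_abs] using h p)

lemma abs_le_two (a b x y : ℝ) :
    |a * x + b * y| ≤ (|a| + |b|) * ((1 + |x|) * (1 + |y|)) := by
  have h1 : |a * x + b * y| ≤ |a| * |x| + |b| * |y| := by
    calc |a * x + b * y| ≤ |a * x| + |b * y| := abs_add_le _ _
      _ = |a| * |x| + |b| * |y| := by rw [abs_mul, abs_mul]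
  have hx := abs_nonneg x
  have hy := abs_nonneg y
  have ha := abs_nonneg a
  have hb := abs_nonneg b
  nlinarith [mul_nonneg ha hy, mul_nonneg hb hx, mul_nonneg (mul_nonneg ha hx) hy,
    mul_nonneg (mul_nonneg hb hx) hy, mul_nonneg ha (mul_nonneg hx hy),
    mul_nonneg hb (mul_nonneg hx hy)]

lemma abs_le_two' (a b c x y : ℝ) :
    |a * x + (b * y + c)| ≤ (|a| + |b| + |c|) * ((1 + |x|) * (1 + |y|)) := by
  have h1 : |a * x + (b * y + c)| ≤ |a| * |x| + |b| * |y| + |c| := by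
    calc |a * x + (b * y + c)| ≤ |a * x| + |b * y + c| := abs_add_le _ _
      _ ≤ |a * x| + (|b * y| + |c|) := by linarith [abs_add_le (b * y) c]
      _ = |a| * |x| + |b| * |y| + |c| := by rw [abs_mul, abs_mul]; ring
  have hx := abs_nonneg x
  have hy := abs_nonneg y
  have ha := abs_nonneg a
  have hb := abs_nonneg b
  have hc := abs_nonneg c
  nlinarith [mul_nonneg ha hy, mul_nonneg hb hx, mul_nonneg hc hx, mul_nonneg hc hy,
    mul_nonneg (mul_nonneg ha hx) hy, mul_nonneg (mul_nonneg hb hx) hy,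
    mul_nonneg (mul_nonneg hc hx) hy]

lemma abs_le_two'' (a b c x y : ℝ) :
    |a * x + b * y + c| ≤ (|a| + |b| + |c|) * ((1 + |x|) * (1 + |y|)) := by
  have := abs_le_two' a b c x y
  rwa [show a * x + (b * y + c) = a * x + b * y + c by ring] at this

lemma abs_le_three (a b s x y z : ℝ) :
    |a * x + b * y + s * z| ≤ (|a| + |b| + |s|) * ((1 + |x|) * (1 + |y|) * (1 + |z|)) := by
  set W := (1 + |x|) * (1 + |y|) with hW
  have hx := abs_nonneg x
  have hy := abs_nonneg y
  have hz := abs_nonneg z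
  have hW1 : (1:ℝ) ≤ W := by rw [hW]; nlinarith [mul_nonneg hx hy]
  have hW0 : (0:ℝ) ≤ W := le_trans zero_le_one hW1
  have hZ1 : (1:ℝ) ≤ 1 + |z| := by linarith
  have h1 : |a * x + b * y + s * z| ≤ (|a| + |b|) * W + |s| * |z| := by
    calc |a * x + b * y + s * z| ≤ |a * x + b * y| + |s * z| := abs_add_le _ _
      _ ≤ (|a| + |b|) * W + |s| * |z| := by
          rw [abs_mul]
          exact add_le_add (abs_le_two a b x y) le_rfl
  have e1 : (|a| + |b|) * W ≤ (|a| + |b|) * (W * (1 + |z|)) := by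
    nlinarith [mul_nonneg (mul_nonneg (by positivity : (0:ℝ) ≤ |a| + |b|) hW0)
      (by linarith : (0:ℝ) ≤ |z|)]
  have hWZ : |z| ≤ W * (1 + |z|) := by nlinarith [mul_nonneg (sub_nonneg.mpr hW1) (by linarith : (0:ℝ) ≤ 1 + |z|)]
  have e2 : |s| * |z| ≤ |s| * (W * (1 + |z|)) := mul_le_mul_of_nonneg_left hWZ (abs_nonneg s)
  calc |a * x + b * y + s * z| ≤ (|a| + |b|) * W + |s| * |z| := h1
    _ ≤ (|a| + |b|) * (W * (1 + |z|)) + |s| * (W * (1 + |z|)) := add_le_add e1 e2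
    _ = (|a| + |b| + |s|) * (W * (1 + |z|)) := by ring

end Stmt7Aux
end
section
open MeasureTheory ProbabilityTheory Real Filter Set Stmt7Aux
open scoped ENNReal NNReal Topology
namespace Stmt7Aux

variable (a b s : ℝ)

lemma rmaxsq_abs (t : ℝ) : |(max t 0) ^ 2| = |max t 0| ^ 2 := abs_pow _ _

-- integrability of the main integrand for J1 over P3
lemma intF1 : Integrable
    (fun p : (ℝ × ℝ) × ℝ => p.1.1 * p.1.2 * (max (a * p.1.1 + b * p.1.2 + s * p.2) 0) ^ 2) P3 := by
  refine master3 (Continuous.aestronglyMeasurable (by fun_prop)) ((|a| + |b| + |s|) ^ 2) 3 3 2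
    fun p => ?_
  obtain ⟨⟨x, y⟩, z⟩ := p
  simp only
  have h1 : |max (a * x + b * y + s * z) 0| ≤
      (|a| + |b| + |s|) * ((1 + |x|) * (1 + |y|) * (1 + |z|)) :=
    (abs_rmax_le _).trans (abs_le_three a b s x y z)
  have hx : |x| ≤ 1 + |x| := by linarith [abs_nonneg x]
  have hy : |y| ≤ 1 + |y| := by linarith [abs_nonneg y]
  calc |x * y * (max (a * x + b * y + s * z) 0) ^ 2|
      = |x| * |y| * |max (a * x + b * y + s * z) 0| ^ 2 := by
        rw [abs_mul, abs_mul, abs_pow]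
    _ ≤ (1 + |x|) * (1 + |y|) *
        ((|a| + |b| + |s|) * ((1 + |x|) * (1 + |y|) * (1 + |z|))) ^ 2 := by
        gcongr
    _ = (|a| + |b| + |s|) ^ 2 * ((1 + |x|) ^ 3 * (1 + |y|) ^ 3 * (1 + |z|) ^ 2) := by ring

-- integrability of z-section of J1 integrand over P2
lemma intF1sec (z : ℝ) : Integrable
    (fun w : ℝ × ℝ => w.1 * w.2 * (max (a * w.1 + b * w.2 + s * z) 0) ^ 2) P2 := by
  refine master2 (Continuous.aestronglyMeasurable (by fun_prop)) ((|a| + |b| + |s * z|) ^ 2) 3 3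
    fun p => ?_
  obtain ⟨x, y⟩ := p
  simp only
  have h1 : |max (a * x + b * y + s * z) 0| ≤
      (|a| + |b| + |s * z|) * ((1 + |x|) * (1 + |y|)) :=
    (abs_rmax_le _).trans (abs_le_two'' a b (s * z) x y)
  have hx : |x| ≤ 1 + |x| := by linarith [abs_nonneg x]
  have hy : |y| ≤ 1 + |y| := by linarith [abs_nonneg y]
  calc |x * y * (max (a * x + b * y + s * z) 0) ^ 2|
      = |x| * |y| * |max (a * x + b * y + s * z) 0| ^ 2 := by
        rw [abs_mul, abs_mul, abs_pow]
    _ ≤ (1 + |x|) * (1 + |y|) *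
        ((|a| + |b| + |s * z|) * ((1 + |x|) * (1 + |y|))) ^ 2 := by
        gcongr
    _ = (|a| + |b| + |s * z|) ^ 2 * ((1 + |x|) ^ 3 * (1 + |y|) ^ 3) := by ring

-- integrability for the Fubini swap in J1
lemma intSwap (c : ℝ) : Integrable
    (fun q : ℝ × ℝ => q.1 * max (a * q.2 + (b * q.1 + c)) 0) P2 := by
  refine master2 (Continuous.aestronglyMeasurable (by fun_prop)) (|a| + |b| + |c|) 2 1
    fun p => ?_
  obtain ⟨y, x⟩ := p
  simp only
  have h1 : |max (a * x + (b * y + c)) 0| ≤ (|a| + |b| + |c|) * ((1 + |x|) * (1 + |y|)) :=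
    (abs_rmax_le _).trans (abs_le_two' a b c x y)
  have hy : |y| ≤ 1 + |y| := by linarith [abs_nonneg y]
  calc |y * max (a * x + (b * y + c)) 0| = |y| * |max (a * x + (b * y + c)) 0| := abs_mul _ _
    _ ≤ (1 + |y|) * ((|a| + |b| + |c|) * ((1 + |x|) * (1 + |y|))) := by
        gcongr
    _ = (|a| + |b| + |c|) * ((1 + |y|) ^ 2 * (1 + |x|) ^ 1) := by ring

lemma J1_inner (z : ℝ) :
    |∫ w : ℝ × ℝ, w.1 * w.2 * (max (a * w.1 + b * w.2 + s * z) 0) ^ 2 ∂P2| ≤ 2 * |a| * |b| := by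
  have hG := intF1sec a b s z
  rw [show P2 = stdG.prod stdG from rfl] at hG ⊢
  rw [integral_prod_symm _ hG]
  -- now : |∫ y, ∫ x, x * y * (max (a*x + b*y + s*z) 0)^2 ∂stdG ∂stdG| ≤ 2|a||b|
  have inner1 : ∀ y : ℝ, (∫ x, x * y * (max (a * x + b * y + s * z) 0) ^ 2 ∂stdG)
      = 2 * a * (y * ∫ x, max (a * x + (b * y + s * z)) 0 ∂stdG) := by
    intro y
    rw [show (fun x => x * y * (max (a * x + b * y + s * z) 0) ^ 2)
        = fun x => y * (x * (max (a * x + (b * y + s * z)) 0) ^ 2) from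
      funext fun x => by rw [show a * x + b * y + s * z = a * x + (b * y + s * z) by ring]; ring]
    rw [integral_const_mul, K1 a (b * y + s * z)]
    ring
  simp only [inner1]
  have swap1 : (∫ y, 2 * a * (y * ∫ x, max (a * x + (b * y + s * z)) 0 ∂stdG) ∂stdG)
      = 2 * a * ∫ y, ∫ x, y * max (a * x + (b * y + s * z)) 0 ∂stdG ∂stdG := by
    rw [integral_const_mul]
    congr 1
    refine integral_congr_ae (ae_of_all _ fun y => ?_)
    show y * (∫ x, max (a * x + (b * y + s * z)) 0 ∂stdG)
        = ∫ x, y * max (a * x + (b * y + s * z)) 0 ∂stdG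
    exact (integral_const_mul y _).symm
  rw [swap1]
  have hsw : Integrable (Function.uncurry fun y x => y * max (a * x + (b * y + s * z)) 0)
      (stdG.prod stdG) := by
    have := intSwap a b (s * z)
    rw [show P2 = stdG.prod stdG from rfl] at this
    apply this.congr
    refine ae_of_all _ fun q => ?_
    rfl
  rw [integral_integral_swap hsw]
  -- |2a * ∫ x, ∫ y, y * max (a*x + (b*y + s*z)) 0| ≤ 2|a||b|
  have hT : Integrable (fun x => ∫ y, y * max (a * x + (b * y + s * z)) 0 ∂stdG) stdG := by
    have := hsw.integral_prod_right
    simpa [Function.uncurry] using this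
  have hpt : ∀ x : ℝ, |∫ y, y * max (a * x + (b * y + s * z)) 0 ∂stdG| ≤ |b| := by
    intro x
    have : (fun y => y * max (a * x + (b * y + s * z)) 0)
        = fun y => y * max (b * y + (a * x + s * z)) 0 := by
      funext y
      rw [show a * x + (b * y + s * z) = b * y + (a * x + s * z) by ring]
    rw [this]
    exact K2 b (a * x + s * z)
  calc |2 * a * ∫ x, ∫ y, y * max (a * x + (b * y + s * z)) 0 ∂stdG ∂stdG|
      = 2 * |a| * |∫ x, ∫ y, y * max (a * x + (b * y + s * z)) 0 ∂stdG ∂stdG| := by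
        rw [abs_mul, abs_mul]; norm_num
    _ ≤ 2 * |a| * |b| := by
        refine mul_le_mul_of_nonneg_left ?_ (by positivity)
        calc |∫ x, ∫ y, y * max (a * x + (b * y + s * z)) 0 ∂stdG ∂stdG|
            ≤ ∫ x, |∫ y, y * max (a * x + (b * y + s * z)) 0 ∂stdG| ∂stdG := abs_int_le _ _
          _ ≤ ∫ _x, |b| ∂stdG := integral_mono hT.abs (integrable_const _) hpt
          _ = |b| := by simp

lemma J1_bound :
    |∫ p : (ℝ × ℝ) × ℝ, p.1.1 * p.1.2 * (max (a * p.1.1 + b * p.1.2 + s * p.2) 0) ^ 2 ∂P3|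
      ≤ 2 * |a| * |b| := by
  have hF := intF1 a b s
  rw [show P3 = P2.prod stdG from rfl] at hF ⊢
  rw [integral_prod_symm _ hF]
  have hH := hF.integral_prod_right
  calc |∫ z, ∫ w : ℝ × ℝ, w.1 * w.2 * (max (a * w.1 + b * w.2 + s * z) 0) ^ 2 ∂P2 ∂stdG|
      ≤ ∫ z, |∫ w : ℝ × ℝ, w.1 * w.2 * (max (a * w.1 + b * w.2 + s * z) 0) ^ 2 ∂P2| ∂stdG :=
        abs_int_le _ _
    _ ≤ ∫ _z, 2 * |a| * |b| ∂stdG :=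
        integral_mono hH.abs (integrable_const _) (J1_inner a b s)
    _ = 2 * |a| * |b| := by simp

end Stmt7Aux
end
section
open MeasureTheory ProbabilityTheory Real Filter Set Stmt7Aux
open scoped ENNReal NNReal Topology
namespace Stmt7Aux

variable (a b s : ℝ)

lemma intF2 : Integrable
    (fun p : (ℝ × ℝ) × ℝ => p.1.1 * max (a * p.1.1 + b * p.1.2 + s * p.2) 0) P3 := by
  refine master3 (Continuous.aestronglyMeasurable (by fun_prop)) (|a| + |b| + |s|) 2 1 1
    fun p => ?_
  obtain ⟨⟨x, y⟩, z⟩ := p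
  simp only
  have h1 : |max (a * x + b * y + s * z) 0| ≤
      (|a| + |b| + |s|) * ((1 + |x|) * (1 + |y|) * (1 + |z|)) :=
    (abs_rmax_le _).trans (abs_le_three a b s x y z)
  have hx : |x| ≤ 1 + |x| := by linarith [abs_nonneg x]
  calc |x * max (a * x + b * y + s * z) 0| = |x| * |max (a * x + b * y + s * z) 0| := abs_mul _ _
    _ ≤ (1 + |x|) * ((|a| + |b| + |s|) * ((1 + |x|) * (1 + |y|) * (1 + |z|))) := by gcongr
    _ = (|a| + |b| + |s|) * ((1 + |x|) ^ 2 * (1 + |y|) ^ 1 * (1 + |z|) ^ 1) := by ring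

lemma intF2sec (z : ℝ) : Integrable
    (fun w : ℝ × ℝ => w.1 * max (a * w.1 + b * w.2 + s * z) 0) P2 := by
  refine master2 (Continuous.aestronglyMeasurable (by fun_prop)) (|a| + |b| + |s * z|) 2 1
    fun p => ?_
  obtain ⟨x, y⟩ := p
  simp only
  have h1 : |max (a * x + b * y + s * z) 0| ≤
      (|a| + |b| + |s * z|) * ((1 + |x|) * (1 + |y|)) :=
    (abs_rmax_le _).trans (abs_le_two'' a b (s * z) x y)
  have hx : |x| ≤ 1 + |x| := by linarith [abs_nonneg x]
  calc |x * max (a * x + b * y + s * z) 0| = |x| * |max (a * x + b * y + s * z) 0| := abs_mul _ _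
    _ ≤ (1 + |x|) * ((|a| + |b| + |s * z|) * ((1 + |x|) * (1 + |y|))) := by gcongr
    _ = (|a| + |b| + |s * z|) * ((1 + |x|) ^ 2 * (1 + |y|) ^ 1) := by ring

lemma intF3sec (z : ℝ) : Integrable
    (fun w : ℝ × ℝ => w.2 * max (a * w.1 + b * w.2 + s * z) 0) P2 := by
  refine master2 (Continuous.aestronglyMeasurable (by fun_prop)) (|a| + |b| + |s * z|) 1 2
    fun p => ?_
  obtain ⟨x, y⟩ := p
  simp only
  have h1 : |max (a * x + b * y + s * z) 0| ≤
      (|a| + |b| + |s * z|) * ((1 + |x|) * (1 + |y|)) :=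
    (abs_rmax_le _).trans (abs_le_two'' a b (s * z) x y)
  have hy : |y| ≤ 1 + |y| := by linarith [abs_nonneg y]
  calc |y * max (a * x + b * y + s * z) 0| = |y| * |max (a * x + b * y + s * z) 0| := abs_mul _ _
    _ ≤ (1 + |y|) * ((|a| + |b| + |s * z|) * ((1 + |x|) * (1 + |y|))) := by gcongr
    _ = (|a| + |b| + |s * z|) * ((1 + |x|) ^ 1 * (1 + |y|) ^ 2) := by ring

lemma intF3 : Integrable
    (fun p : (ℝ × ℝ) × ℝ => p.1.2 * max (a * p.1.1 + b * p.1.2 + s * p.2) 0) P3 := by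
  refine master3 (Continuous.aestronglyMeasurable (by fun_prop)) (|a| + |b| + |s|) 1 2 1
    fun p => ?_
  obtain ⟨⟨x, y⟩, z⟩ := p
  simp only
  have h1 : |max (a * x + b * y + s * z) 0| ≤
      (|a| + |b| + |s|) * ((1 + |x|) * (1 + |y|) * (1 + |z|)) :=
    (abs_rmax_le _).trans (abs_le_three a b s x y z)
  have hy : |y| ≤ 1 + |y| := by linarith [abs_nonneg y]
  calc |y * max (a * x + b * y + s * z) 0| = |y| * |max (a * x + b * y + s * z) 0| := abs_mul _ _
    _ ≤ (1 + |y|) * ((|a| + |b| + |s|) * ((1 + |x|) * (1 + |y|) * (1 + |z|))) := by gcongr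
    _ = (|a| + |b| + |s|) * ((1 + |x|) ^ 1 * (1 + |y|) ^ 2 * (1 + |z|) ^ 1) := by ring

lemma J2_inner (z : ℝ) :
    |∫ w : ℝ × ℝ, w.1 * max (a * w.1 + b * w.2 + s * z) 0 ∂P2| ≤ |a| := by
  have hG := intF2sec a b s z
  rw [show P2 = stdG.prod stdG from rfl] at hG ⊢
  rw [integral_prod_symm _ hG]
  have hT : Integrable (fun y => ∫ x, x * max (a * x + b * y + s * z) 0 ∂stdG) stdG :=
    hG.integral_prod_right
  have hpt : ∀ y : ℝ, |∫ x, x * max (a * x + b * y + s * z) 0 ∂stdG| ≤ |a| := by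
    intro y
    have : (fun x => x * max (a * x + b * y + s * z) 0)
        = fun x => x * max (a * x + (b * y + s * z)) 0 := by
      funext x
      rw [show a * x + b * y + s * z = a * x + (b * y + s * z) by ring]
    rw [this]
    exact K2 a (b * y + s * z)
  calc |∫ y, ∫ x, x * max (a * x + b * y + s * z) 0 ∂stdG ∂stdG|
      ≤ ∫ y, |∫ x, x * max (a * x + b * y + s * z) 0 ∂stdG| ∂stdG := abs_int_le _ _
    _ ≤ ∫ _y, |a| ∂stdG := integral_mono hT.abs (integrable_const _) hpt
    _ = |a| := by simp

lemma J3_inner (z : ℝ) :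
    |∫ w : ℝ × ℝ, w.2 * max (a * w.1 + b * w.2 + s * z) 0 ∂P2| ≤ |b| := by
  have hG := intF3sec a b s z
  rw [show P2 = stdG.prod stdG from rfl] at hG ⊢
  rw [integral_prod _ hG]
  have hT : Integrable (fun x => ∫ y, y * max (a * x + b * y + s * z) 0 ∂stdG) stdG :=
    hG.integral_prod_left
  have hpt : ∀ x : ℝ, |∫ y, y * max (a * x + b * y + s * z) 0 ∂stdG| ≤ |b| := by
    intro x
    have : (fun y => y * max (a * x + b * y + s * z) 0)
        = fun y => y * max (b * y + (a * x + s * z)) 0 := by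
      funext y
      rw [show a * x + b * y + s * z = b * y + (a * x + s * z) by ring]
    rw [this]
    exact K2 b (a * x + s * z)
  calc |∫ x, ∫ y, y * max (a * x + b * y + s * z) 0 ∂stdG ∂stdG|
      ≤ ∫ x, |∫ y, y * max (a * x + b * y + s * z) 0 ∂stdG| ∂stdG := abs_int_le _ _
    _ ≤ ∫ _x, |b| ∂stdG := integral_mono hT.abs (integrable_const _) hpt
    _ = |b| := by simp

lemma J2_bound :
    |∫ p : (ℝ × ℝ) × ℝ, p.1.1 * max (a * p.1.1 + b * p.1.2 + s * p.2) 0 ∂P3| ≤ |a| := by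
  have hF := intF2 a b s
  rw [show P3 = P2.prod stdG from rfl] at hF ⊢
  rw [integral_prod_symm _ hF]
  have hH := hF.integral_prod_right
  calc |∫ z, ∫ w : ℝ × ℝ, w.1 * max (a * w.1 + b * w.2 + s * z) 0 ∂P2 ∂stdG|
      ≤ ∫ z, |∫ w : ℝ × ℝ, w.1 * max (a * w.1 + b * w.2 + s * z) 0 ∂P2| ∂stdG := abs_int_le _ _
    _ ≤ ∫ _z, |a| ∂stdG := integral_mono hH.abs (integrable_const _) (J2_inner a b s)
    _ = |a| := by simp

lemma J3_bound :
    |∫ p : (ℝ × ℝ) × ℝ, p.1.2 * max (a * p.1.1 + b * p.1.2 + s * p.2) 0 ∂P3| ≤ |b| := by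
  have hF := intF3 a b s
  rw [show P3 = P2.prod stdG from rfl] at hF ⊢
  rw [integral_prod_symm _ hF]
  have hH := hF.integral_prod_right
  calc |∫ z, ∫ w : ℝ × ℝ, w.2 * max (a * w.1 + b * w.2 + s * z) 0 ∂P2 ∂stdG|
      ≤ ∫ z, |∫ w : ℝ × ℝ, w.2 * max (a * w.1 + b * w.2 + s * z) 0 ∂P2| ∂stdG := abs_int_le _ _
    _ ≤ ∫ _z, |b| ∂stdG := integral_mono hH.abs (integrable_const _) (J3_inner a b s)
    _ = |b| := by simp

end Stmt7Aux
end
section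
open MeasureTheory ProbabilityTheory Real Filter Set Stmt7Aux
open scoped ENNReal NNReal Topology
namespace Stmt7Aux

lemma iIndepFun_ae_congr {Ω : Type} [MeasureSpace Ω] {f g : Fin 3 → Ω → ℝ}
    (hf : iIndepFun f ℙ) (h : ∀ i, f i =ᵐ[ℙ] g i) :
    iIndepFun g ℙ := by
  rw [iIndepFun_iff_measure_inter_preimage_eq_mul] at hf ⊢
  intro S sets hsets
  have hae : ∀ i, (f i ⁻¹' sets i : Set Ω) =ᵐ[ℙ] (g i ⁻¹' sets i) := by
    intro i
    filter_upwards [h i] with ω hω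
    show (f i ω ∈ sets i) = (g i ω ∈ sets i)
    rw [hω]
  have h1 : ℙ (⋂ i ∈ S, g i ⁻¹' sets i) = ℙ (⋂ i ∈ S, f i ⁻¹' sets i) := by
    rw [← Finset.set_biInter_coe, ← Finset.set_biInter_coe]
    exact measure_congr
      (EventuallyEq.countable_bInter S.countable_toSet fun i _ => (hae i).symm)
  rw [h1, hf S hsets]
  exact Finset.prod_congr rfl fun i _ => measure_congr (hae i)

end Stmt7Aux
end
section
open MeasureTheory ProbabilityTheory Real Filter Set Stmt7Aux
open scoped ENNReal NNReal Topology

theorem stmt7 :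
    ∃ (C σ₀ : ℝ) (p : ℕ), 0 < C ∧ 0 < σ₀ ∧
      ∀ (σ a b : ℝ), σ₀ ≤ σ → 0 ≤ a → 0 ≤ b → a ≤ 5 * Real.log σ → b ≤ 5 * Real.log σ →
      ∀ (Ω : Type) (_ : MeasureSpace Ω) (_ : IsProbabilityMeasure (ℙ : Measure Ω))
        (u v ξ : Ω → ℝ),
        Measure.map u ℙ = gaussianReal 0 1 →
        Measure.map v ℙ = gaussianReal 0 1 →
        Measure.map ξ ℙ = gaussianReal 0 (Real.toNNReal (σ ^ 2)) →
        iIndepFun ![u, v, ξ] ℙ →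
        |(∫ ω, u ω * v ω * (max (a * u ω + b * v ω + ξ ω) 0) ^ 2 ∂ℙ)
          - (∫ ω, u ω * max (a * u ω + b * v ω + ξ ω) 0 ∂ℙ)
            * (∫ ω, v ω * max (a * u ω + b * v ω + ξ ω) 0 ∂ℙ)| ≤
          C * (Real.log σ) ^ p := by
  refine ⟨75, 3, 2, by norm_num, by norm_num, ?_⟩
  intro σ a b hσ ha hb ha5 hb5 Ω _ _ u v ξ hu hv hξ hind
  -- measurable modifications
  have hu_ae : AEMeasurable u ℙ := aemeasurable_of_map_neZero (by rw [hu]; infer_instance)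
  have hv_ae : AEMeasurable v ℙ := aemeasurable_of_map_neZero (by rw [hv]; infer_instance)
  have hξ_ae : AEMeasurable ξ ℙ := aemeasurable_of_map_neZero (by rw [hξ]; infer_instance)
  set u' := hu_ae.mk u with hu'def
  set v' := hv_ae.mk v with hv'def
  set ξ' := hξ_ae.mk ξ with hξ'def
  have hu'm : Measurable u' := hu_ae.measurable_mk
  have hv'm : Measurable v' := hv_ae.measurable_mk
  have hξ'm : Measurable ξ' := hξ_ae.measurable_mk
  have hu'e : u =ᵐ[ℙ] u' := hu_ae.ae_eq_mk
  have hv'e : v =ᵐ[ℙ] v' := hv_ae.ae_eq_mk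
  have hξ'e : ξ =ᵐ[ℙ] ξ' := hξ_ae.ae_eq_mk
  have hu'map : Measure.map u' ℙ = stdG := by
    rw [← Measure.map_congr hu'e, hu]; rfl
  have hv'map : Measure.map v' ℙ = stdG := by
    rw [← Measure.map_congr hv'e, hv]; rfl
  have hξ'map : Measure.map ξ' ℙ = gaussianReal 0 (Real.toNNReal (σ ^ 2)) := by
    rw [← Measure.map_congr hξ'e, hξ]
  have hind' : iIndepFun ![u', v', ξ'] ℙ := by
    refine iIndepFun_ae_congr hind ?_
    intro i
    fin_cases i
    · simpa using hu'e
    · simpa using hv'e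
    · simpa using hξ'e
  have hmeas : ∀ i, Measurable (![u', v', ξ'] i) := by
    intro i
    fin_cases i
    · simpa using hu'm
    · simpa using hv'm
    · simpa using hξ'm
  have hpair : IndepFun (fun ω => (u' ω, v' ω)) ξ' ℙ := by
    have := hind'.indepFun_prodMk hmeas 0 1 2 (by decide) (by decide)
    simpa using this
  have huv : IndepFun u' v' ℙ := by
    have := hind'.indepFun (show (0 : Fin 3) ≠ 1 by decide)
    simpa using this
  have hmap2 : Measure.map (fun ω => (u' ω, v' ω)) ℙ = P2 := by
    rw [(indepFun_iff_map_prod_eq_prod_map_map hu'm.aemeasurable hv'm.aemeasurable).mp huv,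
      hu'map, hv'map]
    rfl
  have hmapT : Measure.map (fun ω => ((u' ω, v' ω), ξ' ω)) ℙ
      = P2.prod (gaussianReal 0 (Real.toNNReal (σ ^ 2))) := by
    rw [(indepFun_iff_map_prod_eq_prod_map_map (hu'm.prodMk hv'm).aemeasurable
      hξ'm.aemeasurable).mp hpair, hmap2, hξ'map]
  have hν : gaussianReal 0 (Real.toNNReal (σ ^ 2)) = Measure.map (fun z => σ * z) stdG := by
    have h1 : (⟨σ ^ 2, sq_nonneg σ⟩ : ℝ≥0) * 1 = Real.toNNReal (σ ^ 2) := by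
      apply NNReal.coe_injective
      simp [Real.coe_toNNReal _ (sq_nonneg σ)]
      rfl
    rw [show stdG = gaussianReal 0 1 from rfl,
      show (fun z => σ * z) = (σ * ·) from rfl, gaussianReal_map_const_mul σ, mul_zero]
    exact congrArg (gaussianReal 0) h1.symm
  have hP2ν : P2.prod (gaussianReal 0 (Real.toNNReal (σ ^ 2)))
      = Measure.map (Prod.map id fun z => σ * z) P3 := by
    calc P2.prod (gaussianReal 0 (Real.toNNReal (σ ^ 2)))
        = (Measure.map id P2).prod (Measure.map (fun z => σ * z) stdG) := by
          rw [Measure.map_id, hν]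
      _ = Measure.map (Prod.map id fun z => σ * z) (P2.prod stdG) :=
          Measure.map_prod_map _ _ measurable_id (by fun_prop)
      _ = Measure.map (Prod.map id fun z => σ * z) P3 := rfl
  have hT : Measurable (fun ω => ((u' ω, v' ω), ξ' ω)) := (hu'm.prodMk hv'm).prodMk hξ'm
  have key : ∀ F : (ℝ × ℝ) × ℝ → ℝ, Continuous F →
      ∫ ω, F ((u' ω, v' ω), ξ' ω) ∂ℙ = ∫ p, F (p.1, σ * p.2) ∂P3 := by
    intro F hF
    rw [← integral_map hT.aemeasurable hF.aestronglyMeasurable, hmapT, hP2ν,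
      integral_map (Measurable.aemeasurable (by fun_prop)) hF.aestronglyMeasurable]
    refine integral_congr_ae (ae_of_all _ fun p => ?_)
    obtain ⟨w, z⟩ := p
    rfl
  -- the three expectations
  have e1 : (∫ ω, u ω * v ω * (max (a * u ω + b * v ω + ξ ω) 0) ^ 2 ∂ℙ)
      = ∫ p : (ℝ × ℝ) × ℝ, p.1.1 * p.1.2 * (max (a * p.1.1 + b * p.1.2 + σ * p.2) 0) ^ 2 ∂P3 := by
    have hae : (fun ω => u ω * v ω * (max (a * u ω + b * v ω + ξ ω) 0) ^ 2)
        =ᵐ[ℙ] fun ω => (fun p : (ℝ × ℝ) × ℝ =>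
          p.1.1 * p.1.2 * (max (a * p.1.1 + b * p.1.2 + p.2) 0) ^ 2) ((u' ω, v' ω), ξ' ω) := by
      filter_upwards [hu'e, hv'e, hξ'e] with ω h1 h2 h3
      simp only [h1, h2, h3]
    rw [integral_congr_ae hae, key (fun p : (ℝ × ℝ) × ℝ =>
      p.1.1 * p.1.2 * (max (a * p.1.1 + b * p.1.2 + p.2) 0) ^ 2) (by fun_prop)]
  have e2 : (∫ ω, u ω * max (a * u ω + b * v ω + ξ ω) 0 ∂ℙ)
      = ∫ p : (ℝ × ℝ) × ℝ, p.1.1 * max (a * p.1.1 + b * p.1.2 + σ * p.2) 0 ∂P3 := by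
    have hae : (fun ω => u ω * max (a * u ω + b * v ω + ξ ω) 0)
        =ᵐ[ℙ] fun ω => (fun p : (ℝ × ℝ) × ℝ =>
          p.1.1 * max (a * p.1.1 + b * p.1.2 + p.2) 0) ((u' ω, v' ω), ξ' ω) := by
      filter_upwards [hu'e, hv'e, hξ'e] with ω h1 h2 h3
      simp only [h1, h2, h3]
    rw [integral_congr_ae hae, key (fun p : (ℝ × ℝ) × ℝ =>
      p.1.1 * (max (a * p.1.1 + b * p.1.2 + p.2) 0)) (by fun_prop)]
  have e3 : (∫ ω, v ω * max (a * u ω + b * v ω + ξ ω) 0 ∂ℙ)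
      = ∫ p : (ℝ × ℝ) × ℝ, p.1.2 * max (a * p.1.1 + b * p.1.2 + σ * p.2) 0 ∂P3 := by
    have hae : (fun ω => v ω * max (a * u ω + b * v ω + ξ ω) 0)
        =ᵐ[ℙ] fun ω => (fun p : (ℝ × ℝ) × ℝ =>
          p.1.2 * max (a * p.1.1 + b * p.1.2 + p.2) 0) ((u' ω, v' ω), ξ' ω) := by
      filter_upwards [hu'e, hv'e, hξ'e] with ω h1 h2 h3
      simp only [h1, h2, h3]
    rw [integral_congr_ae hae, key (fun p : (ℝ × ℝ) × ℝ =>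
      p.1.2 * (max (a * p.1.1 + b * p.1.2 + p.2) 0)) (by fun_prop)]
  rw [e1, e2, e3]
  -- final numeric bound
  set J1 := ∫ p : (ℝ × ℝ) × ℝ,
    p.1.1 * p.1.2 * (max (a * p.1.1 + b * p.1.2 + σ * p.2) 0) ^ 2 ∂P3 with hJ1
  set J2 := ∫ p : (ℝ × ℝ) × ℝ, p.1.1 * max (a * p.1.1 + b * p.1.2 + σ * p.2) 0 ∂P3 with hJ2
  set J3 := ∫ p : (ℝ × ℝ) × ℝ, p.1.2 * max (a * p.1.1 + b * p.1.2 + σ * p.2) 0 ∂P3 with hJ3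
  have h1 : |J1| ≤ 2 * |a| * |b| := J1_bound a b σ
  have h2 : |J2| ≤ |a| := J2_bound a b σ
  have h3 : |J3| ≤ |b| := J3_bound a b σ
  have habs : |J1 - J2 * J3| ≤ |J1| + |J2| * |J3| := by
    calc |J1 - J2 * J3| ≤ |J1| + |J2 * J3| := abs_sub _ _
      _ = |J1| + |J2| * |J3| := by rw [abs_mul]
  have hL : 0 ≤ Real.log σ := Real.log_nonneg (by linarith)
  have hab : |a| = a := abs_of_nonneg ha
  have hbb : |b| = b := abs_of_nonneg hb
  rw [hab] at h1 h2
  rw [hbb] at h1 h3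
  have h23 : |J2| * |J3| ≤ a * b :=
    mul_le_mul h2 h3 (abs_nonneg _) ha
  have hfin : a * b ≤ 25 * (Real.log σ) ^ 2 := by nlinarith
  have hJ1b : |J1| ≤ 2 * a * b := by linarith
  have hsum : |J1 - J2 * J3| ≤ 3 * (a * b) := by linarith
  linarith

end
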